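/- Suppose there are n agents and items o_1, …, o_m arriving one per round, partitioned into two types T_1 and T_2, where each agent values all items of the same type equally. Allocate items of type T_1 in round-robin order over agents 1, 2, …, n (cycling), and items of type T_2 in reverse round-robin order n, n−1, …, 1 (cycling), each type tracked by its own independent counter. Then the resulting allocation is TEF1 for goods when all values are nonnegative, and TEF1 for chores when all values are nonpositive. -/

import Mathlib

open Finset

def bundle {n m : ℕ} (A : Fin m → Fin n) (S : Finset (Fin m)) (i : Fin n) : Finset (Fin m) :=
  S.filter (fun j => A j = i)

def bval {m : ℕ} (v : Fin m → ℝ) (B : Finset (Fin m)) : ℝ := ∑ j ∈ B, v j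

def EF1goods {n m : ℕ} (v : Fin n → Fin m → ℝ) (A : Fin m → Fin n) (S : Finset (Fin m)) : Prop :=
  ∀ i j : Fin n, bundle A S j = ∅ ∨
    ∃ g ∈ bundle A S j, bval (v i) (bundle A S i) ≥ bval (v i) ((bundle A S j).erase g)

def EF1chores {n m : ℕ} (v : Fin n → Fin m → ℝ) (A : Fin m → Fin n) (S : Finset (Fin m)) : Prop :=
  ∀ i j : Fin n, bundle A S i = ∅ ∨
    ∃ c ∈ bundle A S i, bval (v i) ((bundle A S i).erase c) ≥ bval (v i) (bundle A S j)

/-- Number of earlier items of the same type as item `j`. -/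
def sameTypeCount {m : ℕ} (type : Fin m → Bool) (j : Fin m) : ℕ :=
  (Finset.univ.filter (fun k => k < j ∧ type k = type j)).card

/-- The two-type algorithm: items of type `true` are allocated round-robin over
agents `1, 2, …, n` (i.e. `0, 1, …, n−1`), and items of type `false` in reverse
round-robin over agents `n, n−1, …, 1`, each type with its own counter. -/
def twoTypeAlloc {m : ℕ} (n : ℕ) (hn : 0 < n) (type : Fin m → Bool) (j : Fin m) : Fin n :=
  if type j then ⟨sameTypeCount type j % n, Nat.mod_lt _ hn⟩
  else ⟨n - 1 - sameTypeCount type j % n, by omega⟩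

lemma rank_image {α : Type*} [LinearOrder α] [DecidableEq α] (s : Finset α) :
    s.image (fun j => (s.filter (· < j)).card) = Finset.range s.card := by
  induction s using Finset.induction_on_max with
  | empty => simp
  | insert a s ha ih =>
    have hnot : a ∉ s := fun h => lt_irrefl a (ha a h)
    have h1 : ((insert a s).filter (· < a)) = s := by
      ext x
      simp only [mem_filter, mem_insert]
      constructor
      · rintro ⟨h | h, hlt⟩
        · exact absurd hlt (by simp [h])
        · exact h
      · exact fun h => ⟨Or.inr h, ha x h⟩
    rw [image_insert, h1]
    have h2 : Finset.image (fun j => (((insert a s)).filter (· < j)).card) s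
        = Finset.image (fun j => (s.filter (· < j)).card) s := by
      apply image_congr
      intro j hj
      have : ((insert a s)).filter (· < j) = s.filter (· < j) := by
        ext x
        simp only [mem_filter, mem_insert]
        constructor
        · rintro ⟨h | h, hlt⟩
          · exact absurd (hlt.trans (ha j hj)) (by simp [h])
          · exact ⟨h, hlt⟩
        · exact fun ⟨h, hlt⟩ => ⟨Or.inr h, hlt⟩
      simp [this]
    rw [h2, ih, card_insert_of_notMem hnot, Finset.range_add_one]

lemma rank_mono {α : Type*} [LinearOrder α] [DecidableEq α] (s : Finset α)
    {x y : α} (hx : x ∈ s) (h : x < y) :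
    (s.filter (· < x)).card < (s.filter (· < y)).card := by
  apply card_lt_card
  have hsub : s.filter (· < x) ⊆ s.filter (· < y) := by
    intro z hz
    rw [mem_filter] at hz ⊢
    exact ⟨hz.1, hz.2.trans h⟩
  rw [Finset.ssubset_iff_of_subset hsub]
  exact ⟨x, mem_filter.2 ⟨hx, h⟩, by simp⟩

lemma rank_injOn {α : Type*} [LinearOrder α] [DecidableEq α] (s : Finset α) :
    Set.InjOn (fun j => (s.filter (· < j)).card) s := by
  intro x hx y hy hxy
  rcases lt_trichotomy x y with h | h | h
  · exact absurd hxy (Nat.ne_of_lt (rank_mono s hx h))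
  · exact h
  · exact absurd hxy.symm (Nat.ne_of_lt (rank_mono s hy h))

lemma card_filter_rank {α : Type*} [LinearOrder α] [DecidableEq α] (s : Finset α)
    (P : ℕ → Prop) [DecidablePred P] :
    (s.filter (fun j => P ((s.filter (· < j)).card))).card
      = ((Finset.range s.card).filter P).card := by
  rw [← rank_image s, filter_image, card_image_of_injOn]
  exact (rank_injOn s).mono (fun x hx => mem_coe.mpr (filter_subset _ _ (mem_coe.mp hx)))

lemma count_mod (n k : ℕ) (hn : 0 < n) (hk : k < n) (N : ℕ) :
    ((Finset.range N).filter (fun c => c % n = k)).card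
      = N / n + if k < N % n then 1 else 0 := by
  induction N with
  | zero => simp [Nat.not_lt_zero]
  | succ N ih =>
    have hr : N % n < n := Nat.mod_lt N hn
    have hNd := Nat.div_add_mod' N n
    have hd1 : (N + 1) / n = if N % n + 1 = n then N / n + 1 else N / n := by
      split_ifs with h
      · have : N + 1 = (N / n + 1) * n := by rw [add_mul, one_mul]; omega
        rw [this, Nat.mul_div_cancel _ hn]
      · have : N + 1 = (N % n + 1) + N / n * n := by omega
        rw [this, Nat.add_mul_div_right _ _ hn, Nat.div_eq_of_lt (by omega)]; omega
    have hm1 : (N + 1) % n = if N % n + 1 = n then 0 else N % n + 1 := by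
      split_ifs with h
      · have : N + 1 = (N / n + 1) * n := by rw [add_mul, one_mul]; omega
        rw [this, Nat.mul_mod_left]
      · have : N + 1 = (N % n + 1) + N / n * n := by omega
        rw [this, Nat.add_mul_mod_self_right, Nat.mod_eq_of_lt (by omega)]
    rw [Finset.range_add_one, filter_insert, hd1, hm1]
    by_cases h : N % n = k
    · rw [if_pos h, card_insert_of_notMem (by simp), ih]
      split_ifs <;> omega
    · rw [if_neg h, ih]
      split_ifs <;> omega
def cnt (n N p : ℕ) : ℕ := N / n + if p < N % n then 1 else 0

lemma cnt_pair (n T F x y : ℕ) (hn : 0 < n) (hx : x < n) (hy : y < n) :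
    cnt n T x ≤ cnt n T y + 1
      ∧ (cnt n T y < cnt n T x → cnt n F (n - 1 - x) ≤ cnt n F (n - 1 - y)) := by
  have hT : T % n < n := Nat.mod_lt _ hn
  have hF : F % n < n := Nat.mod_lt _ hn
  unfold cnt
  constructor
  · split_ifs <;> omega
  · intro h
    split_ifs at h ⊢ <;> omega

lemma bundle_filter_type {n m : ℕ} (hn : 0 < n) (type : Fin m → Bool) (t : Fin m)
    (k : Fin n) (b : Bool) :
    ((bundle (twoTypeAlloc n hn type) (Finset.univ.filter (fun j => j ≤ t)) k).filter
        (fun j => type j = b)).card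
      = cnt n ((Finset.univ.filter (fun j : Fin m => j ≤ t ∧ type j = b)).card)
          (cond b k.val (n - 1 - k.val)) := by
  set s := Finset.univ.filter (fun j : Fin m => j ≤ t ∧ type j = b) with hs
  have hstc : ∀ j : Fin m, j ≤ t → type j = b →
      sameTypeCount type j = (s.filter (· < j)).card := by
    intro j hjt hjb
    unfold sameTypeCount
    congr 1
    ext x
    simp only [hs, mem_filter, mem_univ, true_and]
    constructor
    · rintro ⟨hlt, hx⟩
      exact ⟨⟨le_of_lt (lt_of_lt_of_le hlt hjt), by rw [hx, hjb]⟩, hlt⟩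
    · rintro ⟨⟨_, hx⟩, hlt⟩
      exact ⟨hlt, by rw [hx, hjb]⟩
  have hiff : ∀ j : Fin m, j ≤ t → type j = b →
      (twoTypeAlloc n hn type j = k ↔
        ((s.filter (· < j)).card) % n = cond b k.val (n - 1 - k.val)) := by
    intro j hjt hjb
    rw [← hstc j hjt hjb]
    unfold twoTypeAlloc
    cases b with
    | true =>
      rw [if_pos (by simp [hjb])]
      simp [Fin.ext_iff]
    | false =>
      rw [if_neg (by simp [hjb])]
      have h1 : sameTypeCount type j % n < n := Nat.mod_lt _ hn
      have h2 : k.val < n := k.isLt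
      simp only [Fin.ext_iff, Bool.cond_false]
      constructor <;> intro h <;> omega
  have hset : (bundle (twoTypeAlloc n hn type) (Finset.univ.filter (fun j => j ≤ t)) k).filter
        (fun j => type j = b)
      = s.filter (fun j => ((s.filter (· < j)).card) % n = cond b k.val (n - 1 - k.val)) := by
    ext j
    simp only [bundle, mem_filter, mem_univ, true_and, hs]
    constructor
    · rintro ⟨⟨hjt, hA⟩, hb⟩
      exact ⟨⟨hjt, hb⟩, (hiff j hjt hb).1 hA⟩
    · rintro ⟨⟨hjt, hb⟩, hr⟩
      exact ⟨⟨hjt, (hiff j hjt hb).2 hr⟩, hb⟩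
  have htgt : cond b k.val (n - 1 - k.val) < n := by
    cases b
    · simp only [Bool.cond_false]; omega
    · simpa using k.isLt
  rw [hset, card_filter_rank s (fun c => c % n = cond b k.val (n - 1 - k.val)),
    count_mod n _ hn htgt]
  rfl

lemma bundle_split {n m : ℕ} (hn : 0 < n) (type : Fin m → Bool) (t : Fin m) (k : Fin n) :
    (bundle (twoTypeAlloc n hn type) (Finset.univ.filter (fun j => j ≤ t)) k).filter
        (fun j => ¬ type j = true)
      = (bundle (twoTypeAlloc n hn type) (Finset.univ.filter (fun j => j ≤ t)) k).filter
        (fun j => type j = false) := by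
  apply filter_congr
  intro j _
  simp

lemma bundle_card {n m : ℕ} (hn : 0 < n) (type : Fin m → Bool) (t : Fin m) (k : Fin n) :
    (bundle (twoTypeAlloc n hn type) (Finset.univ.filter (fun j => j ≤ t)) k).card
      = cnt n ((Finset.univ.filter (fun j : Fin m => j ≤ t ∧ type j = true)).card) k.val
        + cnt n ((Finset.univ.filter (fun j : Fin m => j ≤ t ∧ type j = false)).card)
            (n - 1 - k.val) := by
  rw [← card_filter_add_card_filter_not
    (p := fun j => type j = true) (s := bundle (twoTypeAlloc n hn type) _ k),
    bundle_split hn type t k, bundle_filter_type hn type t k true,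
    bundle_filter_type hn type t k false]
  rfl

lemma bundle_bval {n m : ℕ} (hn : 0 < n) (type : Fin m → Bool) (t : Fin m) (k : Fin n)
    (w : Fin m → ℝ) (ca cb : ℝ)
    (hca : ∀ j : Fin m, type j = true → w j = ca)
    (hcb : ∀ j : Fin m, type j = false → w j = cb) :
    bval w (bundle (twoTypeAlloc n hn type) (Finset.univ.filter (fun j => j ≤ t)) k)
      = (cnt n ((Finset.univ.filter (fun j : Fin m => j ≤ t ∧ type j = true)).card) k.val : ℝ)
          * ca
        + (cnt n ((Finset.univ.filter (fun j : Fin m => j ≤ t ∧ type j = false)).card)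
            (n - 1 - k.val) : ℝ) * cb := by
  unfold bval
  rw [← Finset.sum_filter_add_sum_filter_not
    (bundle (twoTypeAlloc n hn type) (Finset.univ.filter (fun j => j ≤ t)) k)
    (fun j => type j = true)]
  have e1 : ∑ j ∈ (bundle (twoTypeAlloc n hn type)
        (Finset.univ.filter (fun j => j ≤ t)) k).filter (fun j => type j = true), w j
      = ((bundle (twoTypeAlloc n hn type)
          (Finset.univ.filter (fun j => j ≤ t)) k).filter (fun j => type j = true)).card * ca := by
    rw [Finset.sum_congr rfl (fun j hj => hca j (mem_filter.mp hj).2), Finset.sum_const,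
      nsmul_eq_mul]
  have e2 : ∑ j ∈ (bundle (twoTypeAlloc n hn type)
        (Finset.univ.filter (fun j => j ≤ t)) k).filter (fun j => ¬ type j = true), w j
      = ((bundle (twoTypeAlloc n hn type)
          (Finset.univ.filter (fun j => j ≤ t)) k).filter (fun j => type j = false)).card * cb := by
    rw [bundle_split hn type t k,
      Finset.sum_congr rfl (fun j hj => hcb j (mem_filter.mp hj).2), Finset.sum_const,
      nsmul_eq_mul]
  rw [e1, e2, bundle_filter_type hn type t k true, bundle_filter_type hn type t k false]
  rfl

theorem stmt4 (n m : ℕ) (hn : 0 < n) (v : Fin n → Fin m → ℝ) (type : Fin m → Bool)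
    (htype : ∀ i : Fin n, ∀ j k : Fin m, type j = type k → v i j = v i k) :
    ((∀ i j, 0 ≤ v i j) → ∀ t : Fin m,
        EF1goods v (twoTypeAlloc n hn type) (Finset.univ.filter (fun j => j ≤ t))) ∧
    ((∀ i j, v i j ≤ 0) → ∀ t : Fin m,
        EF1chores v (twoTypeAlloc n hn type) (Finset.univ.filter (fun j => j ≤ t))) := by
  classical
  have hconst : ∀ (i : Fin n) (b : Bool), ∃ c : ℝ,
      (∀ j : Fin m, type j = b → v i j = c) ∧ (c = 0 ∨ ∃ j : Fin m, type j = b ∧ c = v i j) := by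
    intro i b
    by_cases h : ∃ j : Fin m, type j = b
    · obtain ⟨j0, hj0⟩ := h
      exact ⟨v i j0, fun j hj => htype i j j0 (by rw [hj, hj0]), Or.inr ⟨j0, hj0, rfl⟩⟩
    · exact ⟨0, fun j hj => absurd ⟨j, hj⟩ h, Or.inl rfl⟩
  constructor
  · -- goods
    intro hpos t i j
    obtain ⟨ca, hca, hcaw⟩ := hconst i true
    obtain ⟨cb, hcb, hcbw⟩ := hconst i false
    have hca0 : 0 ≤ ca := by
      rcases hcaw with h | ⟨j0, _, h⟩
      · exact h.ge
      · rw [h]; exact hpos i j0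
    have hcb0 : 0 ≤ cb := by
      rcases hcbw with h | ⟨j0, _, h⟩
      · exact h.ge
      · rw [h]; exact hpos i j0
    have hBi := bundle_bval hn type t i (v i) ca cb hca hcb
    have hBj := bundle_bval hn type t j (v i) ca cb hca hcb
    have hcardj := bundle_card hn type t j
    set Tc := (Finset.univ.filter (fun x : Fin m => x ≤ t ∧ type x = true)).card with hTc
    set Fc := (Finset.univ.filter (fun x : Fin m => x ≤ t ∧ type x = false)).card with hFc
    have hi' : i.val < n := i.isLt
    have hj' : j.val < n := j.isLt
    have s1 : cnt n Tc j.val ≤ cnt n Tc i.val + 1 :=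
      (cnt_pair n Tc Fc j.val i.val hn hj' hi').1
    have s3 : cnt n Tc i.val < cnt n Tc j.val →
        cnt n Fc (n - 1 - j.val) ≤ cnt n Fc (n - 1 - i.val) :=
      (cnt_pair n Tc Fc j.val i.val hn hj' hi').2
    have s2 : cnt n Fc (n - 1 - j.val) ≤ cnt n Fc (n - 1 - i.val) + 1 :=
      (cnt_pair n Fc Tc (n - 1 - j.val) (n - 1 - i.val) hn (by omega) (by omega)).1
    have s4 : cnt n Fc (n - 1 - i.val) < cnt n Fc (n - 1 - j.val) →
        cnt n Tc j.val ≤ cnt n Tc i.val := by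
      intro h
      have h5 := (cnt_pair n Fc Tc (n - 1 - j.val) (n - 1 - i.val) hn (by omega) (by omega)).2 h
      rwa [show n - 1 - (n - 1 - j.val) = j.val by omega,
        show n - 1 - (n - 1 - i.val) = i.val by omega] at h5
    by_cases hempty : bundle (twoTypeAlloc n hn type) (Finset.univ.filter (fun x => x ≤ t)) j = ∅
    · exact Or.inl hempty
    right
    rcases Nat.lt_or_ge (cnt n Tc i.val) (cnt n Tc j.val) with hlt | hge
    · -- i has one fewer true item : remove a true item from j's bundle
      have hft := bundle_filter_type hn type t j true
      simp only [Bool.cond_true] at hft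
      rw [← hTc] at hft
      have hpos2 : 0 < ((bundle (twoTypeAlloc n hn type)
          (Finset.univ.filter (fun x => x ≤ t)) j).filter (fun x => type x = true)).card := by
        rw [hft]; omega
      obtain ⟨g, hg⟩ := card_pos.mp hpos2
      rw [mem_filter] at hg
      refine ⟨g, hg.1, ?_⟩
      have herase : bval (v i) ((bundle (twoTypeAlloc n hn type)
            (Finset.univ.filter (fun x => x ≤ t)) j).erase g)
          = bval (v i) (bundle (twoTypeAlloc n hn type)
            (Finset.univ.filter (fun x => x ≤ t)) j) - v i g :=
        Finset.sum_erase_eq_sub hg.1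
      rw [herase, hBj, hBi, hca g hg.2]
      have hf := s3 hlt
      have c1 : (cnt n Tc j.val : ℝ) ≤ (cnt n Tc i.val : ℝ) + 1 := by exact_mod_cast s1
      have c2 : (cnt n Fc (n - 1 - j.val) : ℝ) ≤ (cnt n Fc (n - 1 - i.val) : ℝ) := by
        exact_mod_cast hf
      have e1 := mul_le_mul_of_nonneg_right c1 hca0
      have e2 := mul_le_mul_of_nonneg_right c2 hcb0
      rw [add_mul, one_mul] at e1
      linarith
    rcases Nat.lt_or_ge (cnt n Fc (n - 1 - i.val)) (cnt n Fc (n - 1 - j.val)) with hlt2 | hge2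
    · -- remove a false item from j's bundle
      have hft := bundle_filter_type hn type t j false
      simp only [Bool.cond_false] at hft
      rw [← hFc] at hft
      have hpos2 : 0 < ((bundle (twoTypeAlloc n hn type)
          (Finset.univ.filter (fun x => x ≤ t)) j).filter (fun x => type x = false)).card := by
        rw [hft]; omega
      obtain ⟨g, hg⟩ := card_pos.mp hpos2
      rw [mem_filter] at hg
      refine ⟨g, hg.1, ?_⟩
      have herase : bval (v i) ((bundle (twoTypeAlloc n hn type)
            (Finset.univ.filter (fun x => x ≤ t)) j).erase g)
          = bval (v i) (bundle (twoTypeAlloc n hn type)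
            (Finset.univ.filter (fun x => x ≤ t)) j) - v i g :=
        Finset.sum_erase_eq_sub hg.1
      rw [herase, hBj, hBi, hcb g hg.2]
      have ht := s4 hlt2
      have c1 : (cnt n Tc j.val : ℝ) ≤ (cnt n Tc i.val : ℝ) := by exact_mod_cast ht
      have c2 : (cnt n Fc (n - 1 - j.val) : ℝ) ≤ (cnt n Fc (n - 1 - i.val) : ℝ) + 1 := by
        exact_mod_cast s2
      have e1 := mul_le_mul_of_nonneg_right c1 hca0
      have e2 := mul_le_mul_of_nonneg_right c2 hcb0
      rw [add_mul, one_mul] at e2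
      linarith
    · -- no envy at all; remove an arbitrary item
      obtain ⟨g, hg⟩ := nonempty_iff_ne_empty.mpr hempty
      refine ⟨g, hg, ?_⟩
      have herase : bval (v i) ((bundle (twoTypeAlloc n hn type)
            (Finset.univ.filter (fun x => x ≤ t)) j).erase g)
          = bval (v i) (bundle (twoTypeAlloc n hn type)
            (Finset.univ.filter (fun x => x ≤ t)) j) - v i g :=
        Finset.sum_erase_eq_sub hg
      rw [herase, hBj, hBi]
      have c1 : (cnt n Tc j.val : ℝ) ≤ (cnt n Tc i.val : ℝ) := by exact_mod_cast hge
      have c2 : (cnt n Fc (n - 1 - j.val) : ℝ) ≤ (cnt n Fc (n - 1 - i.val) : ℝ) := by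
        exact_mod_cast hge2
      have hg0 : 0 ≤ v i g := hpos i g
      have e1 := mul_le_mul_of_nonneg_right c1 hca0
      have e2 := mul_le_mul_of_nonneg_right c2 hcb0
      linarith
  · -- chores
    intro hneg t i j
    obtain ⟨ca, hca, hcaw⟩ := hconst i true
    obtain ⟨cb, hcb, hcbw⟩ := hconst i false
    have hca0 : ca ≤ 0 := by
      rcases hcaw with h | ⟨j0, _, h⟩
      · exact h.le
      · rw [h]; exact hneg i j0
    have hcb0 : cb ≤ 0 := by
      rcases hcbw with h | ⟨j0, _, h⟩
      · exact h.le
      · rw [h]; exact hneg i j0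
    have hBi := bundle_bval hn type t i (v i) ca cb hca hcb
    have hBj := bundle_bval hn type t j (v i) ca cb hca hcb
    set Tc := (Finset.univ.filter (fun x : Fin m => x ≤ t ∧ type x = true)).card with hTc
    set Fc := (Finset.univ.filter (fun x : Fin m => x ≤ t ∧ type x = false)).card with hFc
    have hi' : i.val < n := i.isLt
    have hj' : j.val < n := j.isLt
    have s1 : cnt n Tc i.val ≤ cnt n Tc j.val + 1 :=
      (cnt_pair n Tc Fc i.val j.val hn hi' hj').1
    have s3 : cnt n Tc j.val < cnt n Tc i.val →
        cnt n Fc (n - 1 - i.val) ≤ cnt n Fc (n - 1 - j.val) :=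
      (cnt_pair n Tc Fc i.val j.val hn hi' hj').2
    have s2 : cnt n Fc (n - 1 - i.val) ≤ cnt n Fc (n - 1 - j.val) + 1 :=
      (cnt_pair n Fc Tc (n - 1 - i.val) (n - 1 - j.val) hn (by omega) (by omega)).1
    have s4 : cnt n Fc (n - 1 - j.val) < cnt n Fc (n - 1 - i.val) →
        cnt n Tc i.val ≤ cnt n Tc j.val := by
      intro h
      have h5 := (cnt_pair n Fc Tc (n - 1 - i.val) (n - 1 - j.val) hn (by omega) (by omega)).2 h
      rwa [show n - 1 - (n - 1 - j.val) = j.val by omega,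
        show n - 1 - (n - 1 - i.val) = i.val by omega] at h5
    by_cases hempty : bundle (twoTypeAlloc n hn type) (Finset.univ.filter (fun x => x ≤ t)) i = ∅
    · exact Or.inl hempty
    right
    rcases Nat.lt_or_ge (cnt n Tc j.val) (cnt n Tc i.val) with hlt | hge
    · -- remove a true chore from i's bundle
      have hft := bundle_filter_type hn type t i true
      simp only [Bool.cond_true] at hft
      rw [← hTc] at hft
      have hpos2 : 0 < ((bundle (twoTypeAlloc n hn type)
          (Finset.univ.filter (fun x => x ≤ t)) i).filter (fun x => type x = true)).card := by
        rw [hft]; omega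
      obtain ⟨c, hc⟩ := card_pos.mp hpos2
      rw [mem_filter] at hc
      refine ⟨c, hc.1, ?_⟩
      have herase : bval (v i) ((bundle (twoTypeAlloc n hn type)
            (Finset.univ.filter (fun x => x ≤ t)) i).erase c)
          = bval (v i) (bundle (twoTypeAlloc n hn type)
            (Finset.univ.filter (fun x => x ≤ t)) i) - v i c :=
        Finset.sum_erase_eq_sub hc.1
      rw [herase, hBj, hBi, hca c hc.2]
      have hf := s3 hlt
      have c1 : (cnt n Tc i.val : ℝ) ≤ (cnt n Tc j.val : ℝ) + 1 := by exact_mod_cast s1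
      have c2 : (cnt n Fc (n - 1 - i.val) : ℝ) ≤ (cnt n Fc (n - 1 - j.val) : ℝ) := by
        exact_mod_cast hf
      have e1 := mul_le_mul_of_nonpos_right c1 hca0
      have e2 := mul_le_mul_of_nonpos_right c2 hcb0
      rw [add_mul, one_mul] at e1
      linarith
    rcases Nat.lt_or_ge (cnt n Fc (n - 1 - j.val)) (cnt n Fc (n - 1 - i.val)) with hlt2 | hge2
    · -- remove a false chore from i's bundle
      have hft := bundle_filter_type hn type t i false
      simp only [Bool.cond_false] at hft
      rw [← hFc] at hft
      have hpos2 : 0 < ((bundle (twoTypeAlloc n hn type)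
          (Finset.univ.filter (fun x => x ≤ t)) i).filter (fun x => type x = false)).card := by
        rw [hft]; omega
      obtain ⟨c, hc⟩ := card_pos.mp hpos2
      rw [mem_filter] at hc
      refine ⟨c, hc.1, ?_⟩
      have herase : bval (v i) ((bundle (twoTypeAlloc n hn type)
            (Finset.univ.filter (fun x => x ≤ t)) i).erase c)
          = bval (v i) (bundle (twoTypeAlloc n hn type)
            (Finset.univ.filter (fun x => x ≤ t)) i) - v i c :=
        Finset.sum_erase_eq_sub hc.1
      rw [herase, hBj, hBi, hcb c hc.2]
      have ht := s4 hlt2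
      have c1 : (cnt n Tc i.val : ℝ) ≤ (cnt n Tc j.val : ℝ) := by exact_mod_cast ht
      have c2 : (cnt n Fc (n - 1 - i.val) : ℝ) ≤ (cnt n Fc (n - 1 - j.val) : ℝ) + 1 := by
        exact_mod_cast s2
      have e1 := mul_le_mul_of_nonpos_right c1 hca0
      have e2 := mul_le_mul_of_nonpos_right c2 hcb0
      rw [add_mul, one_mul] at e2
      linarith
    · -- i already has at most j's counts; remove an arbitrary chore
      obtain ⟨c, hc⟩ := nonempty_iff_ne_empty.mpr hempty
      refine ⟨c, hc, ?_⟩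
      have herase : bval (v i) ((bundle (twoTypeAlloc n hn type)
            (Finset.univ.filter (fun x => x ≤ t)) i).erase c)
          = bval (v i) (bundle (twoTypeAlloc n hn type)
            (Finset.univ.filter (fun x => x ≤ t)) i) - v i c :=
        Finset.sum_erase_eq_sub hc
      rw [herase, hBj, hBi]
      have c1 : (cnt n Tc i.val : ℝ) ≤ (cnt n Tc j.val : ℝ) := by exact_mod_cast hge
      have c2 : (cnt n Fc (n - 1 - i.val) : ℝ) ≤ (cnt n Fc (n - 1 - j.val) : ℝ) := by
        exact_mod_cast hge2
      have hc0 : v i c ≤ 0 := hneg i c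
      have e1 := mul_le_mul_of_nonpos_right c1 hca0
      have e2 := mul_le_mul_of_nonpos_right c2 hcb0
      linarith
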